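/- Let g : (1,∞) → ℝ be differentiable and satisfy g'(t) = (T+1)^{2H-1} g'((T+t)/(T+1)) - T^{2H-1} g'((T+t)/T) for all t > 1, T > 0, where H ∈ (0,1). Then with F(x,y) = xy/(x+y-1), for all x, y ∈ (1,∞): g'(F(x,y)) = ((y-1)/(x+y-1))^{2H-1} g'(x) + (x/(x+y-1))^{2H-1} g'(y). -/

import Mathlib

/-- If g' satisfies the functional equation derived by differentiation, then after the
change of variables x = t, y = (T+t)/T one has
g'(F(x,y)) = ((y-1)/(x+y-1))^{2H-1} g'(x) + (x/(x+y-1))^{2H-1} g'(y),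
with F(x,y) = xy/(x+y-1). -/
theorem change_of_variables (H : ℝ) (hH : H ∈ Set.Ioo (0 : ℝ) 1) (g : ℝ → ℝ)
    (hdiff : ∀ t ∈ Set.Ioi (1 : ℝ), DifferentiableAt ℝ g t)
    (hfe : ∀ t : ℝ, 1 < t → ∀ T : ℝ, 0 < T →
      deriv g t = (T + 1) ^ (2 * H - 1) * deriv g ((T + t) / (T + 1))
                  - T ^ (2 * H - 1) * deriv g ((T + t) / T)) :
    ∀ x y : ℝ, 1 < x → 1 < y →
      deriv g (x * y / (x + y - 1))
        = ((y - 1) / (x + y - 1)) ^ (2 * H - 1) * deriv g x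
          + (x / (x + y - 1)) ^ (2 * H - 1) * deriv g y := by
  intro x y hx hy
  have hy1 : (0:ℝ) < y - 1 := by linarith
  have hs : (0:ℝ) < x + y - 1 := by linarith
  have hx0 : (0:ℝ) < x := by linarith
  set T : ℝ := x / (y - 1) with hT
  have hTpos : 0 < T := div_pos hx0 hy1
  have key := hfe x hx T hTpos
  have h1 : (T + x) / (T + 1) = x * y / (x + y - 1) := by
    rw [hT]
    field_simp [hy1.ne']
    ring
  have h2 : (T + x) / T = y := by
    rw [hT]
    field_simp [hy1.ne']
    ring
  rw [h1, h2] at key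
  have hTeq : T + 1 = (x + y - 1) / (y - 1) := by
    rw [hT]
    field_simp [hy1.ne']
    ring
  set e : ℝ := 2 * H - 1 with he
  set a : ℝ := ((y - 1) / (x + y - 1)) ^ e with ha
  have hapos : 0 < a := Real.rpow_pos_of_pos (div_pos hy1 hs) e
  have hinv : (T + 1) ^ e = a⁻¹ := by
    rw [hTeq, ha, ← Real.inv_rpow (div_pos hy1 hs).le, inv_div]
  have hmul : (x / (x + y - 1)) ^ e = T ^ e * a := by
    rw [ha, ← Real.mul_rpow hTpos.le (div_pos hy1 hs).le]
    congr 1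
    rw [hT]
    field_simp [hy1.ne']
  rw [hinv] at key
  rw [hmul]
  have : a * deriv g x = a * (a⁻¹ * deriv g (x * y / (x + y - 1)) - T ^ e * deriv g y) := by
    rw [← key]
  rw [mul_sub, ← mul_assoc, mul_inv_cancel₀ hapos.ne', one_mul] at this
  linarith [this]
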